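/- Let H₀, H_M, H_W be nonzero finite-dimensional complex Hilbert spaces, let Π₀, Π_M, Π_W be nonzero orthogonal projections on H₀, H_M, H_W respectively, let U be a unitary operator on H₀ ⊗ H_M, and let V be a unitary operator on H_M ⊗ H_W. If (U (Π₀ ⊗ Π_M) U*) ⊗ Π_W = Π₀ ⊗ (V* (Π_M ⊗ Π_W) V) as operators on H₀ ⊗ H_M ⊗ H_W, then there exists a unitary operator Z on H_M such that V* (Π_M ⊗ Π_W) V = (Z* Π_M Z) ⊗ Π_W and U (Π₀ ⊗ Π_M) U* = Π₀ ⊗ (Z* Π_M Z). -/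

import Mathlib

open Kronecker Matrix

section Aux

variable {n : Type*} [Fintype n] [DecidableEq n]

/-- Two `{0,1}`-valued functions with equal sums differ by a permutation. -/
lemma exists_perm_comp_eq (e1 e2 : n → ℝ)
    (h1 : ∀ i, e1 i = 0 ∨ e1 i = 1) (h2 : ∀ i, e2 i = 0 ∨ e2 i = 1)
    (hs : ∑ i, e1 i = ∑ i, e2 i) : ∃ σ : Equiv.Perm n, ∀ i, e1 (σ i) = e2 i := by
  classical
  have key : ∀ (e : n → ℝ), (∀ i, e i = 0 ∨ e i = 1) →
      ∑ i, e i = (Finset.univ.filter (fun i => e i = 1)).card := by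
    intro e he
    rw [← Finset.sum_boole]
    refine Finset.sum_congr rfl fun i _ => ?_
    rcases he i with h | h <;> simp [h]
  have hcard : (Finset.univ.filter (fun i => e1 i = 1)).card
      = (Finset.univ.filter (fun i => e2 i = 1)).card := by
    have := (key e1 h1).symm.trans (hs.trans (key e2 h2))
    exact_mod_cast this
  have hc1 : Fintype.card {i // e2 i = 1} = Fintype.card {i // e1 i = 1} := by
    simp only [Fintype.card_subtype]
    exact hcard.symm
  have hc2 : Fintype.card {i // ¬ e2 i = 1} = Fintype.card {i // ¬ e1 i = 1} := by
    rw [Fintype.card_subtype_compl, Fintype.card_subtype_compl, hc1]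
  let f : {i // e2 i = 1} ≃ {i // e1 i = 1} := Fintype.equivOfCardEq hc1
  let g : {i // ¬ e2 i = 1} ≃ {i // ¬ e1 i = 1} := Fintype.equivOfCardEq hc2
  refine ⟨(Equiv.sumCompl (fun i => e2 i = 1)).symm.trans
    ((f.sumCongr g).trans (Equiv.sumCompl (fun i => e1 i = 1))), fun i => ?_⟩
  by_cases hi : e2 i = 1
  · have hstep : (Equiv.sumCompl fun i => e2 i = 1).symm i = Sum.inl ⟨i, hi⟩ :=
      Equiv.sumCompl_symm_apply_of_pos (p := fun i => e2 i = 1) (a := i) hi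
    simp only [Equiv.trans_apply, hstep, Equiv.sumCongr_apply, Sum.map_inl,
      Equiv.sumCompl_apply_inl]
    rw [(f ⟨i, hi⟩).2, hi]
  · have hstep : (Equiv.sumCompl fun i => e2 i = 1).symm i = Sum.inr ⟨i, hi⟩ :=
      Equiv.sumCompl_symm_apply_of_neg (p := fun i => e2 i = 1) (a := i) hi
    simp only [Equiv.trans_apply, hstep, Equiv.sumCongr_apply, Sum.map_inr,
      Equiv.sumCompl_apply_inr]
    have h1' := (h1 ((g ⟨i, hi⟩) : n)).resolve_right (g ⟨i, hi⟩).2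
    have h2' := (h2 i).resolve_right hi
    rw [h1', h2']

/-- Conjugating a diagonal matrix by a permutation unitary. -/
lemma exists_unitary_diagonal_conj (σ : Equiv.Perm n) (d : n → ℂ) :
    ∃ S ∈ Matrix.unitaryGroup n ℂ,
      S * Matrix.diagonal d * Sᴴ = Matrix.diagonal (d ∘ σ) := by
  classical
  set S : Matrix n n ℂ := Matrix.of fun i j => if σ i = j then 1 else 0 with hS
  have hSD : ∀ (e : n → ℂ), S * Matrix.diagonal e
      = Matrix.of (fun i j => if σ i = j then e (σ i) else 0) := by
    intro e
    ext i j
    simp only [Matrix.mul_apply, hS, Matrix.of_apply, Matrix.diagonal_apply, ite_mul, one_mul,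
      zero_mul]
    rw [Finset.sum_ite_eq (Finset.univ) (σ i)]
    simp
  have hmem : S ∈ Matrix.unitaryGroup n ℂ := by
    rw [Matrix.mem_unitaryGroup_iff, Matrix.star_eq_conjTranspose]
    ext i j
    simp only [Matrix.mul_apply, Matrix.conjTranspose_apply, hS, Matrix.of_apply]
    simp only [apply_ite (star : ℂ → ℂ), star_one, star_zero, ite_mul, one_mul, zero_mul]
    rw [Finset.sum_ite_eq (Finset.univ) (σ i)]
    by_cases hij : i = j
    · simp [hij, Matrix.one_apply]
    · have : ¬ σ j = σ i := fun hc => hij (σ.injective hc).symm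
      simp [this, Matrix.one_apply, hij]
  refine ⟨S, hmem, ?_⟩
  rw [hSD]
  ext i j
  simp only [Matrix.mul_apply, Matrix.conjTranspose_apply, hS, Matrix.of_apply]
  simp only [apply_ite (star : ℂ → ℂ), star_one, star_zero, mul_ite, mul_one, mul_zero]
  rw [Finset.sum_ite_eq (Finset.univ) (σ j)]
  by_cases hij : i = j
  · simp [hij, Matrix.diagonal_apply]
  · have hne : ¬ σ i = σ j := fun hc => hij (σ.injective hc)
    simp [hne, Matrix.diagonal_apply, hij]

/-- Two orthogonal projections with equal trace are unitarily conjugate. -/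
lemma exists_unitary_conj_of_trace_eq (P Q : Matrix n n ℂ)
    (hP : Pᴴ = P) (hP' : P * P = P) (hQ : Qᴴ = Q) (hQ' : Q * Q = Q)
    (ht : P.trace = Q.trace) :
    ∃ Z ∈ Matrix.unitaryGroup n ℂ, Zᴴ * P * Z = Q := by
  classical
  have hPh : P.IsHermitian := hP
  have hQh : Q.IsHermitian := hQ
  set W1 : Matrix n n ℂ := (hPh.eigenvectorUnitary : Matrix n n ℂ) with hW1
  set W2 : Matrix n n ℂ := (hQh.eigenvectorUnitary : Matrix n n ℂ) with hW2
  have hW1mem : W1 ∈ Matrix.unitaryGroup n ℂ := (hPh.eigenvectorUnitary).2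
  have hW2mem : W2 ∈ Matrix.unitaryGroup n ℂ := (hQh.eigenvectorUnitary).2
  set e1 : n → ℝ := hPh.eigenvalues with he1
  set e2 : n → ℝ := hQh.eigenvalues with he2
  have hspec1 : P = W1 * Matrix.diagonal (Complex.ofReal ∘ e1) * W1ᴴ := by
    simpa [← Matrix.star_eq_conjTranspose] using hPh.spectral_theorem
  have hspec2 : Q = W2 * Matrix.diagonal (Complex.ofReal ∘ e2) * W2ᴴ := by
    simpa [← Matrix.star_eq_conjTranspose] using hQh.spectral_theorem
  have hW1' : W1ᴴ * W1 = 1 := by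
    simpa [Matrix.star_eq_conjTranspose] using
      (Matrix.mem_unitaryGroup_iff'.mp hW1mem)
  have hW1'' : W1 * W1ᴴ = 1 := by
    simpa [Matrix.star_eq_conjTranspose] using
      (Matrix.mem_unitaryGroup_iff.mp hW1mem)
  have hW2' : W2ᴴ * W2 = 1 := by
    simpa [Matrix.star_eq_conjTranspose] using
      (Matrix.mem_unitaryGroup_iff'.mp hW2mem)
  have hW2'' : W2 * W2ᴴ = 1 := by
    simpa [Matrix.star_eq_conjTranspose] using
      (Matrix.mem_unitaryGroup_iff.mp hW2mem)
  -- eigenvalues of a projection are 0 or 1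
  have eig01 : ∀ (W : Matrix n n ℂ) (e : n → ℝ), W ∈ Matrix.unitaryGroup n ℂ →
      (W * Matrix.diagonal (Complex.ofReal ∘ e) * Wᴴ) * (W * Matrix.diagonal (Complex.ofReal ∘ e) * Wᴴ)
        = W * Matrix.diagonal (Complex.ofReal ∘ e) * Wᴴ →
      ∀ i, e i = 0 ∨ e i = 1 := by
    intro W e hW hWP i
    have hW' : Wᴴ * W = 1 := by
      simpa [Matrix.star_eq_conjTranspose] using (Matrix.mem_unitaryGroup_iff'.mp hW)
    have cancel : ∀ X Y : Matrix n n ℂ, W * X * Wᴴ = W * Y * Wᴴ → X = Y := by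
      intro X Y hXY
      calc X = 1 * X * 1 := by rw [Matrix.one_mul, Matrix.mul_one]
        _ = (Wᴴ * W) * X * (Wᴴ * W) := by rw [hW']
        _ = Wᴴ * (W * X * Wᴴ) * W := by simp only [Matrix.mul_assoc]
        _ = Wᴴ * (W * Y * Wᴴ) * W := by rw [hXY]
        _ = (Wᴴ * W) * Y * (Wᴴ * W) := by simp only [Matrix.mul_assoc]
        _ = Y := by rw [hW', Matrix.one_mul, Matrix.mul_one]
    have key : Matrix.diagonal (Complex.ofReal ∘ e) * Matrix.diagonal (Complex.ofReal ∘ e)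
        = Matrix.diagonal (Complex.ofReal ∘ e) := by
      apply cancel
      calc W * (Matrix.diagonal (Complex.ofReal ∘ e) * Matrix.diagonal (Complex.ofReal ∘ e)) * Wᴴ
          = (W * Matrix.diagonal (Complex.ofReal ∘ e) * Wᴴ) * (W * Matrix.diagonal (Complex.ofReal ∘ e) * Wᴴ) := by
            calc W * (Matrix.diagonal (Complex.ofReal ∘ e) * Matrix.diagonal (Complex.ofReal ∘ e)) * Wᴴ
                = W * (Matrix.diagonal (Complex.ofReal ∘ e) * ((Wᴴ * W) * (Matrix.diagonal (Complex.ofReal ∘ e) * Wᴴ))) := by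
                  rw [hW']; simp only [Matrix.mul_assoc, Matrix.one_mul]
              _ = (W * Matrix.diagonal (Complex.ofReal ∘ e) * Wᴴ) * (W * Matrix.diagonal (Complex.ofReal ∘ e) * Wᴴ) := by
                  simp only [Matrix.mul_assoc]
        _ = W * Matrix.diagonal (Complex.ofReal ∘ e) * Wᴴ := hWP
    rw [Matrix.diagonal_mul_diagonal] at key
    have := (Matrix.diagonal_eq_diagonal_iff.mp key) i
    have hcx : (e i : ℂ) * e i = (e i : ℂ) := this
    have hre : e i * e i = e i := by exact_mod_cast hcx
    have h0 : e i * (e i - 1) = 0 := by linear_combination hre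
    rcases mul_eq_zero.mp h0 with hq | hq
    · left; exact hq
    · right; linarith
  have h01P : ∀ i, e1 i = 0 ∨ e1 i = 1 :=
    eig01 W1 e1 hW1mem (by rw [← hspec1]; exact hP')
  have h01Q : ∀ i, e2 i = 0 ∨ e2 i = 1 :=
    eig01 W2 e2 hW2mem (by rw [← hspec2]; exact hQ')
  -- traces
  have trdiag : ∀ (W : Matrix n n ℂ) (e : n → ℝ), Wᴴ * W = 1 →
      (W * Matrix.diagonal (Complex.ofReal ∘ e) * Wᴴ).trace = ((∑ i, e i : ℝ) : ℂ) := by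
    intro W e hW'
    rw [Matrix.trace_mul_cycle, hW', Matrix.one_mul, Matrix.trace_diagonal]
    push_cast
    simp [Function.comp]
  have hsum : ∑ i, e1 i = ∑ i, e2 i := by
    have h1 := trdiag W1 e1 hW1'
    have h2 := trdiag W2 e2 hW2'
    rw [← hspec1] at h1; rw [← hspec2] at h2
    have : ((∑ i, e1 i : ℝ) : ℂ) = ((∑ i, e2 i : ℝ) : ℂ) := by
      rw [← h1, ← h2, ht]
    exact_mod_cast this
  obtain ⟨σ, hσ⟩ := exists_perm_comp_eq e1 e2 h01P h01Q hsum
  obtain ⟨S, hSmem, hSconj⟩ := exists_unitary_diagonal_conj σ (Complex.ofReal ∘ e1)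
  have hdiag : Matrix.diagonal (Complex.ofReal ∘ e2) = S * Matrix.diagonal (Complex.ofReal ∘ e1) * Sᴴ := by
    have hfun : Complex.ofReal ∘ e2 = (Complex.ofReal ∘ e1) ∘ σ := by
      funext i
      simp only [Function.comp_apply, hσ i]
    rw [hSconj, hfun]
  refine ⟨W1 * Sᴴ * W2ᴴ, ?_, ?_⟩
  · have h1 : star S ∈ Matrix.unitaryGroup n ℂ := Unitary.star_mem hSmem
    have h2 : star W2 ∈ Matrix.unitaryGroup n ℂ := Unitary.star_mem hW2mem
    rw [← Matrix.star_eq_conjTranspose S] at *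
    rw [← Matrix.star_eq_conjTranspose W2]
    exact mul_mem (mul_mem hW1mem h1) h2
  · have hZH : (W1 * Sᴴ * W2ᴴ)ᴴ = W2 * S * W1ᴴ := by
      simp [Matrix.conjTranspose_mul, Matrix.mul_assoc]
    rw [hZH, hspec1, hspec2, hdiag]
    simp only [Matrix.mul_assoc]
    rw [← Matrix.mul_assoc W1ᴴ W1, hW1', Matrix.one_mul]
    rw [← Matrix.mul_assoc W1ᴴ W1, hW1', Matrix.one_mul]

lemma kronecker_conjTranspose' {l m p q : Type*} (A : Matrix l m ℂ) (B : Matrix p q ℂ) :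
    (A ⊗ₖ B)ᴴ = Aᴴ ⊗ₖ Bᴴ := by
  ext ⟨i, j⟩ ⟨k, l'⟩
  simp only [Matrix.conjTranspose_apply, Matrix.kroneckerMap_apply, star_mul']

end Aux

/-- if `(U (Π₀ ⊗ Π_M) U*) ⊗ Π_W = Π₀ ⊗ (V* (Π_M ⊗ Π_W) V)` for nonzero
orthogonal projections `Π₀, Π_M, Π_W` and unitaries `U` on `H₀ ⊗ H_M`, `V` on `H_M ⊗ H_W`,
then there is a unitary `Z` on `H_M` with `V* (Π_M ⊗ Π_W) V = (Z* Π_M Z) ⊗ Π_W` and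
`U (Π₀ ⊗ Π_M) U* = Π₀ ⊗ (Z* Π_M Z)`. -/
theorem statement3 {H0 HM HW : Type*} [Fintype H0] [Fintype HM] [Fintype HW]
    [DecidableEq H0] [DecidableEq HM] [DecidableEq HW]
    [Nonempty H0] [Nonempty HM] [Nonempty HW]
    (P0 : Matrix H0 H0 ℂ) (hP0 : P0ᴴ = P0) (hP0' : P0 * P0 = P0) (hP0'' : P0 ≠ 0)
    (PM : Matrix HM HM ℂ) (hPM : PMᴴ = PM) (hPM' : PM * PM = PM) (hPM'' : PM ≠ 0)
    (PW : Matrix HW HW ℂ) (hPW : PWᴴ = PW) (hPW' : PW * PW = PW) (hPW'' : PW ≠ 0)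
    (U : Matrix (H0 × HM) (H0 × HM) ℂ) (hU : U ∈ Matrix.unitaryGroup (H0 × HM) ℂ)
    (V : Matrix (HM × HW) (HM × HW) ℂ) (hV : V ∈ Matrix.unitaryGroup (HM × HW) ℂ)
    (h : Matrix.reindex (Equiv.prodAssoc H0 HM HW) (Equiv.prodAssoc H0 HM HW)
          ((U * (P0 ⊗ₖ PM) * Uᴴ) ⊗ₖ PW) = P0 ⊗ₖ (Vᴴ * (PM ⊗ₖ PW) * V)) :
    ∃ Z ∈ Matrix.unitaryGroup HM ℂ,
      Vᴴ * (PM ⊗ₖ PW) * V = (Zᴴ * PM * Z) ⊗ₖ PW ∧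
      U * (P0 ⊗ₖ PM) * Uᴴ = P0 ⊗ₖ (Zᴴ * PM * Z) := by
  classical
  set A : Matrix (H0 × HM) (H0 × HM) ℂ := U * (P0 ⊗ₖ PM) * Uᴴ with hAdef
  set B : Matrix (HM × HW) (HM × HW) ℂ := Vᴴ * (PM ⊗ₖ PW) * V with hBdef
  -- entrywise form of the hypothesis
  have key : ∀ (i i' : H0) (m m' : HM) (w w' : HW),
      A (i, m) (i', m') * PW w w' = P0 i i' * B (m, w) (m', w') := by
    intro i i' m m' w w'
    have := congrFun (congrFun (congrArg (fun M => M.1) (congrArg (fun M => (M, 0)) h))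
      (i, (m, w))) (i', (m', w'))
    simpa [Matrix.reindex_apply, Matrix.submatrix_apply, Equiv.prodAssoc,
      Matrix.kroneckerMap_apply] using this
  -- pick a nonzero entry of PW
  obtain ⟨w0, w0', hc⟩ : ∃ w0 w0', PW w0 w0' ≠ 0 := by
    by_contra hcon
    push_neg at hcon
    exact hPW'' (by ext i j; exact hcon i j)
  set c : ℂ := PW w0 w0' with hcdef
  -- pick a nonzero entry of P0
  obtain ⟨i0, i0', hd⟩ : ∃ i0 i0', P0 i0 i0' ≠ 0 := by
    by_contra hcon
    push_neg at hcon
    exact hP0'' (by ext i j; exact hcon i j)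
  set d : ℂ := P0 i0 i0' with hddef
  -- the middle projection
  set Q : Matrix HM HM ℂ := Matrix.of (fun m m' => c⁻¹ * B (m, w0) (m', w0')) with hQdef
  have hA : A = P0 ⊗ₖ Q := by
    ext ⟨i, m⟩ ⟨i', m'⟩
    have := key i i' m m' w0 w0'
    rw [Matrix.kroneckerMap_apply]
    simp only [hQdef, Matrix.of_apply]
    field_simp
    rw [this]
  have hB : B = Q ⊗ₖ PW := by
    ext ⟨m, w⟩ ⟨m', w'⟩
    have h1 := key i0 i0' m m' w w'
    have h2 : A (i0, m) (i0', m') = d * Q m m' := by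
      rw [hA, Matrix.kroneckerMap_apply]
    rw [h2] at h1
    rw [Matrix.kroneckerMap_apply]
    have := mul_left_cancel₀ hd
      (by rw [← h1]; ring : d * (B (m, w) (m', w')) = d * (Q m m' * PW w w'))
    rw [this]
  -- B is a projection
  have hVstar : Vᴴ = star V := (Matrix.star_eq_conjTranspose V).symm
  have hVV : V * Vᴴ = 1 := by
    simpa [Matrix.star_eq_conjTranspose] using Matrix.mem_unitaryGroup_iff'.mp
      (Unitary.star_mem hV)
  have hVV' : Vᴴ * V = 1 := by
    simpa [Matrix.star_eq_conjTranspose] using Matrix.mem_unitaryGroup_iff'.mp hV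
  have hBH : Bᴴ = B := by
    rw [hBdef]
    simp only [Matrix.conjTranspose_mul, Matrix.conjTranspose_conjTranspose,
      kronecker_conjTranspose', hPM, hPW, Matrix.mul_assoc]
  have hBB : B * B = B := by
    rw [hBdef]
    have : (PM ⊗ₖ PW) * (PM ⊗ₖ PW) = PM ⊗ₖ PW := by
      rw [← Matrix.mul_kronecker_mul, hPM', hPW']
    calc Vᴴ * (PM ⊗ₖ PW) * V * (Vᴴ * (PM ⊗ₖ PW) * V)
        = Vᴴ * ((PM ⊗ₖ PW) * (V * Vᴴ) * (PM ⊗ₖ PW)) * V := by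
          simp only [Matrix.mul_assoc]
      _ = Vᴴ * (PM ⊗ₖ PW) * V := by rw [hVV, Matrix.mul_one, this, Matrix.mul_assoc]
  -- Q is a projection
  have hQH : Qᴴ = Q := by
    have := congrArg (fun M => M) hBH
    rw [hB] at hBH
    have hBH' : Qᴴ ⊗ₖ PWᴴ = Q ⊗ₖ PW := by
      rw [← kronecker_conjTranspose']; exact hBH
    rw [hPW] at hBH'
    ext m m'
    have := congrFun (congrFun (congrArg (fun M => M.1) (congrArg (fun M => (M, 0)) hBH'))
      (m, w0)) (m', w0')
    simp only [Matrix.kroneckerMap_apply] at this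
    exact mul_right_cancel₀ hc this
  have hQQ : Q * Q = Q := by
    rw [hB] at hBB
    rw [← Matrix.mul_kronecker_mul, hPW'] at hBB
    ext m m'
    have := congrFun (congrFun (congrArg (fun M => M.1) (congrArg (fun M => (M, 0)) hBB))
      (m, w0)) (m', w0')
    simp only [Matrix.kroneckerMap_apply] at this
    exact mul_right_cancel₀ hc this
  -- trace of PW is nonzero
  have htrPW : PW.trace ≠ 0 := by
    have h1 : PW.trace = (PW * PWᴴ).trace := by rw [hPW, hPW']
    have h2 : (PW * PWᴴ).trace = ∑ i, ∑ j, PW i j * (starRingEnd ℂ (PW i j)) := by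
      simp [Matrix.trace, Matrix.diag, Matrix.mul_apply, Matrix.conjTranspose_apply]
    have h3 : (PW * PWᴴ).trace = ((∑ i, ∑ j, Complex.normSq (PW i j) : ℝ) : ℂ) := by
      rw [h2]
      push_cast
      refine Finset.sum_congr rfl fun i _ => Finset.sum_congr rfl fun j _ => ?_
      rw [Complex.mul_conj]
    intro hzero
    rw [h1, h3] at hzero
    have hzero' : (∑ i, ∑ j, Complex.normSq (PW i j) : ℝ) = 0 := by exact_mod_cast hzero
    have hnn : ∀ i ∈ (Finset.univ : Finset HW),
        (0:ℝ) ≤ ∑ j, Complex.normSq (PW i j) :=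
      fun i _ => Finset.sum_nonneg fun j _ => Complex.normSq_nonneg _
    have hall := (Finset.sum_eq_zero_iff_of_nonneg hnn).mp hzero'
    apply hPW''
    ext i j
    have hi := hall i (Finset.mem_univ i)
    have hnn' : ∀ j ∈ (Finset.univ : Finset HW), (0:ℝ) ≤ Complex.normSq (PW i j) :=
      fun j _ => Complex.normSq_nonneg _
    have hij := (Finset.sum_eq_zero_iff_of_nonneg hnn').mp hi j (Finset.mem_univ j)
    simpa using Complex.normSq_eq_zero.mp hij
  -- trace Q = trace PM
  have htrB : B.trace = PM.trace * PW.trace := by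
    rw [hBdef, Matrix.trace_mul_cycle, hVV, Matrix.one_mul, Matrix.trace_kronecker]
  have htrB' : B.trace = Q.trace * PW.trace := by rw [hB, Matrix.trace_kronecker]
  have htrQM : PM.trace = Q.trace := by
    have := htrB.symm.trans htrB'
    exact mul_right_cancel₀ htrPW this
  -- get the unitary
  obtain ⟨Z, hZmem, hZconj⟩ := exists_unitary_conj_of_trace_eq PM Q hPM hPM' hQH hQQ htrQM
  refine ⟨Z, hZmem, ?_, ?_⟩
  · rw [hZconj, ← hB]
  · rw [hZconj, ← hA]
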